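/- arXiv:2511.10141 — 3 statements merged into one kernel-verified Lean document; each statement's English description precedes it below -/
import Mathlib

section
/- For any tessarine vectors x, y ∈ 𝕋ⁿ, the augmented vector of the componentwise product x ⋆ y satisfies \overline{x ⋆ y} = 𝒟^x ȳ, where 𝒟^x = 𝒥ₙ diag(xʳ) 𝒥ₙᴴ, xʳ ∈ ℝ^{4n} is the real vector of x, and ȳ ∈ 𝕋^{4n} is the augmented vector of y. -/
open MeasureTheory Matrix
open scoped Kronecker

noncomputable section

/-- The tessarine algebra `𝕋`: the 4-dimensional commutative real algebra with basis
`{1, ı, ȷ, κ}` and multiplication rules `ı² = κ² = −1`, `ȷ² = 1`, `ıȷ = κ`, `ȷκ = ı`, `κı = −ȷ`. -/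
@[ext] structure Tess : Type where
  re  : ℝ
  imI : ℝ
  imJ : ℝ
  imK : ℝ

namespace Tess

instance : Zero Tess := ⟨⟨0,0,0,0⟩⟩
instance : One Tess := ⟨⟨1,0,0,0⟩⟩
instance : Add Tess := ⟨fun a b => ⟨a.re+b.re, a.imI+b.imI, a.imJ+b.imJ, a.imK+b.imK⟩⟩
instance : Neg Tess := ⟨fun a => ⟨-a.re, -a.imI, -a.imJ, -a.imK⟩⟩
instance : Mul Tess := ⟨fun a b =>
  ⟨a.re*b.re - a.imI*b.imI + a.imJ*b.imJ - a.imK*b.imK,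
   a.re*b.imI + a.imI*b.re + a.imJ*b.imK + a.imK*b.imJ,
   a.re*b.imJ + a.imJ*b.re - a.imI*b.imK - a.imK*b.imI,
   a.re*b.imK + a.imK*b.re + a.imI*b.imJ + a.imJ*b.imI⟩⟩

@[simp] lemma zero_re : (0 : Tess).re = 0 := rfl
@[simp] lemma zero_imI : (0 : Tess).imI = 0 := rfl
@[simp] lemma zero_imJ : (0 : Tess).imJ = 0 := rfl
@[simp] lemma zero_imK : (0 : Tess).imK = 0 := rfl
@[simp] lemma one_re : (1 : Tess).re = 1 := rfl
@[simp] lemma one_imI : (1 : Tess).imI = 0 := rfl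
@[simp] lemma one_imJ : (1 : Tess).imJ = 0 := rfl
@[simp] lemma one_imK : (1 : Tess).imK = 0 := rfl
@[simp] lemma add_re (a b : Tess) : (a+b).re = a.re+b.re := rfl
@[simp] lemma add_imI (a b : Tess) : (a+b).imI = a.imI+b.imI := rfl
@[simp] lemma add_imJ (a b : Tess) : (a+b).imJ = a.imJ+b.imJ := rfl
@[simp] lemma add_imK (a b : Tess) : (a+b).imK = a.imK+b.imK := rfl
@[simp] lemma neg_re (a : Tess) : (-a).re = -a.re := rfl
@[simp] lemma neg_imI (a : Tess) : (-a).imI = -a.imI := rfl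
@[simp] lemma neg_imJ (a : Tess) : (-a).imJ = -a.imJ := rfl
@[simp] lemma neg_imK (a : Tess) : (-a).imK = -a.imK := rfl
@[simp] lemma mul_re (a b : Tess) :
    (a*b).re = a.re*b.re - a.imI*b.imI + a.imJ*b.imJ - a.imK*b.imK := rfl
@[simp] lemma mul_imI (a b : Tess) :
    (a*b).imI = a.re*b.imI + a.imI*b.re + a.imJ*b.imK + a.imK*b.imJ := rfl
@[simp] lemma mul_imJ (a b : Tess) :
    (a*b).imJ = a.re*b.imJ + a.imJ*b.re - a.imI*b.imK - a.imK*b.imI := rfl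
@[simp] lemma mul_imK (a b : Tess) :
    (a*b).imK = a.re*b.imK + a.imK*b.re + a.imI*b.imJ + a.imJ*b.imI := rfl

instance : CommRing Tess where
  add := (· + ·)
  zero := 0
  neg := Neg.neg
  mul := (· * ·)
  one := 1
  add_assoc a b c := by ext <;> simp <;> ring
  zero_add a := by ext <;> simp
  add_zero a := by ext <;> simp
  add_comm a b := by ext <;> simp <;> ring
  left_distrib a b c := by ext <;> simp <;> ring
  right_distrib a b c := by ext <;> simp <;> ring
  zero_mul a := by ext <;> simp
  mul_zero a := by ext <;> simp
  mul_assoc a b c := by ext <;> simp <;> ring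
  one_mul a := by ext <;> simp
  mul_one a := by ext <;> simp
  mul_comm a b := by ext <;> simp <;> ring
  neg_add_cancel a := by ext <;> simp
  nsmul := nsmulRec
  zsmul := zsmulRec

end Tess
namespace Tess

/-- Tessarine conjugation `x* = x_r − ı x_ı + ȷ x_ȷ − κ x_κ`. -/
def conj (x : Tess) : Tess := ⟨x.re, -x.imI, x.imJ, -x.imK⟩
/-- Auxiliary conjugation `x^ı = x_r + ı x_ı − ȷ x_ȷ − κ x_κ`. -/
def conjI (x : Tess) : Tess := ⟨x.re, x.imI, -x.imJ, -x.imK⟩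
/-- Auxiliary conjugation `x^κ = x_r − ı x_ı − ȷ x_ȷ + κ x_κ`. -/
def conjK (x : Tess) : Tess := ⟨x.re, -x.imI, -x.imJ, x.imK⟩
/-- Embedding of the reals into the tessarines. -/
def ofReal (a : ℝ) : Tess := ⟨a, 0, 0, 0⟩
/-- The imaginary unit `ı`. -/
def unitI : Tess := ⟨0,1,0,0⟩
/-- The imaginary unit `ȷ`. -/
def unitJ : Tess := ⟨0,0,1,0⟩
/-- The imaginary unit `κ`. -/
def unitK : Tess := ⟨0,0,0,1⟩
/-- The four real components of a tessarine, indexed by `ν ∈ {r, ı, ȷ, κ}` (as `Fin 4`). -/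
def comp (ν : Fin 4) (x : Tess) : ℝ := ![x.re, x.imI, x.imJ, x.imK] ν
/-- The product `⋆` of two tessarines:
`a ⋆ b = a_r b_r + ı a_ı b_ı + ȷ a_ȷ b_ȷ + κ a_κ b_κ`. -/
def star4 (a b : Tess) : Tess := ⟨a.re*b.re, a.imI*b.imI, a.imJ*b.imJ, a.imK*b.imK⟩

instance : MeasurableSpace Tess :=
  MeasurableSpace.comap (fun x : Tess => (x.re, x.imI, x.imJ, x.imK)) inferInstance

end Tess

/-- The conjugations `id, (·)*, (·)^ı, (·)^κ`, indexed by `Fin 4`. -/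
def cnu : Fin 4 → Tess → Tess := ![id, Tess.conj, Tess.conjI, Tess.conjK]

/-- Hermitian (conjugate) transpose of a tessarine matrix: transpose composed with
entrywise tessarine conjugation. -/
def Matrix.hT {m n : Type*} (M : Matrix m n Tess) : Matrix n m Tess :=
  Matrix.of fun a b => Tess.conj (M b a)

/-- Componentwise `⋆` product of two tessarine vectors. -/
def vstar {n : ℕ} (x y : Fin n → Tess) : Fin n → Tess := fun j => Tess.star4 (x j) (y j)

/-- The augmented vector `x̄ = [xᵀ, xᴴ, x^ıᵀ, x^κᵀ]ᵀ ∈ 𝕋^{4n}` of `x ∈ 𝕋ⁿ`. -/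
def augv {n : ℕ} (x : Fin n → Tess) : Fin 4 × Fin n → Tess :=
  fun p => cnu p.1 (x p.2)

/-- The real vector `xʳ = [x_rᵀ, x_ıᵀ, x_ȷᵀ, x_κᵀ]ᵀ ∈ ℝ^{4n}` of `x ∈ 𝕋ⁿ`. -/
def realv {n : ℕ} (x : Fin n → Tess) : Fin 4 × Fin n → ℝ :=
  fun p => Tess.comp p.1 (x p.2)

/-- The `4 × 4` tessarine matrix `𝒜` with rows `(1, ı, ȷ, κ)`, `(1, −ı, ȷ, −κ)`,
`(1, ı, −ȷ, −κ)`, `(1, −ı, −ȷ, κ)`. -/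
def tessA : Matrix (Fin 4) (Fin 4) Tess :=
  !![1,  Tess.unitI,  Tess.unitJ,  Tess.unitK;
     1, -Tess.unitI,  Tess.unitJ, -Tess.unitK;
     1,  Tess.unitI, -Tess.unitJ, -Tess.unitK;
     1, -Tess.unitI, -Tess.unitJ,  Tess.unitK]

/-- The matrix `𝒥ₙ = (1/2) 𝒜 ⊗ Iₙ`. -/
def Jn (n : ℕ) : Matrix (Fin 4 × Fin n) (Fin 4 × Fin n) Tess :=
  Tess.ofReal (1/2) • (tessA ⊗ₖ (1 : Matrix (Fin n) (Fin n) Tess))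

/-- Componentwise expectation of a tessarine-valued random variable. -/
def texp {Ω : Type*} [MeasurableSpace Ω] (μ : Measure Ω) (f : Ω → Tess) : Tess :=
  ⟨∫ ω, (f ω).re ∂μ, ∫ ω, (f ω).imI ∂μ, ∫ ω, (f ω).imJ ∂μ, ∫ ω, (f ω).imK ∂μ⟩

/-- The pseudo-cross-correlation matrix `Γ_{xy} = E[x yᴴ]` of two tessarine random vectors. -/
def Gamma {Ω m m' : Type*} [MeasurableSpace Ω] (μ : Measure Ω)
    (x : Ω → m → Tess) (y : Ω → m' → Tess) : Matrix m m' Tess :=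
  Matrix.of fun a b => texp μ (fun ω => x ω a * Tess.conj (y ω b))

/-- Entrywise expectation of a random tessarine matrix. -/
def texpM {Ω m m' : Type*} [MeasurableSpace Ω] (μ : Measure Ω)
    (F : Ω → Matrix m m' Tess) : Matrix m m' Tess :=
  Matrix.of fun a b => texp μ (fun ω => F ω a b)

/-- A tessarine random vector has zero mean. -/
def ZeroMean {Ω m : Type*} [MeasurableSpace Ω] (μ : Measure Ω) (x : Ω → m → Tess) : Prop :=
  ∀ a, texp μ (fun ω => x ω a) = 0

/-- A tessarine random vector is second order: all its real components are in `L²`. -/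
def SecondOrder {Ω m : Type*} [MeasurableSpace Ω] (μ : Measure Ω) (x : Ω → m → Tess) : Prop :=
  ∀ a ν, MemLp (fun ω => Tess.comp ν (x ω a)) 2 μ

section Properness

variable {Ω T T' m m' : Type*} [MeasurableSpace Ω] (μ : Measure Ω)

/-- Vanishing of the pseudo-cross-correlations `Γ_{x y^ν}(t,s)`, `ν = *, ı, κ`
(cross `𝕋₁`-properness). -/
def CrossT1 (x : T → Ω → m → Tess) (y : T' → Ω → m' → Tess) : Prop :=
  ∀ t s, Gamma μ (x t) (fun ω => Tess.conj ∘ y s ω) = 0 ∧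
    Gamma μ (x t) (fun ω => Tess.conjI ∘ y s ω) = 0 ∧
    Gamma μ (x t) (fun ω => Tess.conjK ∘ y s ω) = 0

/-- Vanishing of the pseudo-cross-correlations `Γ_{x y^ν}(t,s)`, `ν = ı, κ`
(cross `𝕋₂`-properness). -/
def CrossT2 (x : T → Ω → m → Tess) (y : T' → Ω → m' → Tess) : Prop :=
  ∀ t s, Gamma μ (x t) (fun ω => Tess.conjI ∘ y s ω) = 0 ∧
    Gamma μ (x t) (fun ω => Tess.conjK ∘ y s ω) = 0

/-- A tessarine signal is `𝕋₁`-proper. -/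
def T1proper (x : T → Ω → m → Tess) : Prop := CrossT1 μ x x

/-- A tessarine signal is `𝕋₂`-proper. -/
def T2proper (x : T → Ω → m → Tess) : Prop := CrossT2 μ x x

/-- Two tessarine signals are jointly `𝕋₁`-proper. -/
def JointlyT1 (x : T → Ω → m → Tess) (y : T → Ω → m' → Tess) : Prop :=
  T1proper μ x ∧ T1proper μ y ∧ CrossT1 μ x y

/-- Two tessarine signals are jointly `𝕋₂`-proper. -/
def JointlyT2 (x : T → Ω → m → Tess) (y : T → Ω → m' → Tess) : Prop :=
  T2proper μ x ∧ T2proper μ y ∧ CrossT2 μ x y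

end Properness

/-- `est` is a linear MMSE estimator of `target` based on the observations
`obs 1, …, obs s`: it is a (tessarine-) linear combination of the observations and the
estimation error is orthogonal to each observation. -/
def IsLMMSE {Ω m m' : Type*} [MeasurableSpace Ω] [Fintype m'] (μ : Measure Ω)
    (target : Ω → m → Tess) (obs : ℕ → Ω → m' → Tess) (s : ℕ) (est : Ω → m → Tess) : Prop :=
  (∃ C : ℕ → Matrix m m' Tess, ∀ ω, est ω = ∑ j ∈ Finset.Icc 1 s, (C j).mulVec (obs j ω)) ∧
  ∀ j, 1 ≤ j → j ≤ s → Gamma μ (fun ω => target ω - est ω) (obs j) = 0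

/-- The `k`-lift of a tessarine vector: for `k = 1` the vector itself, for `k = 2`
the vector `[xᵀ, xᴴ]ᵀ`. -/
def klift {k n : ℕ} (x : Fin n → Tess) : Fin k × Fin n → Tess :=
  fun p => if p.1.val = 0 then x p.2 else Tess.conj (x p.2)
lemma fin4_mk2 (h : 2 < 4) : (⟨2, h⟩ : Fin 4) = 2 := rfl
lemma fin4_mk3 (h : 3 < 4) : (⟨3, h⟩ : Fin 4) = 3 := rfl

@[simp] lemma Tess.conj_zero : Tess.conj 0 = 0 := by ext <;> simp [Tess.conj]

/-- Sign matrix of `𝒜`. -/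
def sgn : Fin 4 → Fin 4 → ℝ := fun μ ρ => !![(1:ℝ),1,1,1;1,-1,1,-1;1,1,-1,-1;1,-1,-1,1] μ ρ

/-- The entries of `𝒥 diag(uʳ) 𝒥ᴴ` are real. -/
def creal (μ ν : Fin 4) (u : Tess) : ℝ :=
  (1/4) * ∑ ρ : Fin 4, sgn μ ρ * sgn ν ρ * Tess.comp ρ u

set_option maxHeartbeats 1600000 in
lemma entry_eq (μ ν : Fin 4) (u : Tess) :
    (∑ ρ : Fin 4, Tess.ofReal (1/2) * tessA μ ρ * Tess.ofReal (Tess.comp ρ u) *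
      (Tess.ofReal (1/2) * tessA ν ρ).conj) = Tess.ofReal (creal μ ν u) := by
  fin_cases μ <;> fin_cases ν <;>
    simp only [Fin.sum_univ_four, tessA, creal, sgn, Tess.comp, Matrix.cons_val',
      Matrix.cons_val_zero, Matrix.cons_val_one, Matrix.head_cons, Matrix.empty_val',
      Matrix.cons_val_fin_one, Matrix.of_apply, Matrix.cons_val_two, Matrix.tail_cons,
      Matrix.cons_val_three, Fin.isValue, Matrix.head_fin_const,
      Fin.mk_zero, Fin.mk_one, fin4_mk2, fin4_mk3] <;>
    ext <;>
    simp only [Tess.conj, Tess.ofReal, Tess.unitI, Tess.unitJ, Tess.unitK,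
      Tess.mul_re, Tess.mul_imI, Tess.mul_imJ, Tess.mul_imK, Tess.add_re, Tess.add_imI,
      Tess.add_imJ, Tess.add_imK, Tess.neg_re, Tess.neg_imI, Tess.neg_imJ, Tess.neg_imK,
      Tess.one_re, Tess.one_imI, Tess.one_imJ, Tess.one_imK] <;>
    ring

set_option maxHeartbeats 1600000 in
lemma key (μ : Fin 4) (u v : Tess) :
    cnu μ (u.star4 v) = ∑ ν : Fin 4, Tess.ofReal (creal μ ν u) * cnu ν v := by
  fin_cases μ <;>
    simp only [Fin.sum_univ_four, cnu, creal, sgn, Tess.comp, Matrix.cons_val',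
      Matrix.cons_val_zero, Matrix.cons_val_one, Matrix.head_cons, Matrix.empty_val',
      Matrix.cons_val_fin_one, Matrix.of_apply, Matrix.cons_val_two, Matrix.tail_cons,
      Matrix.cons_val_three, Fin.isValue, Matrix.head_fin_const, id_eq,
      Fin.mk_zero, Fin.mk_one, fin4_mk2, fin4_mk3] <;>
    ext <;>
    simp only [Tess.conj, Tess.conjI, Tess.conjK, Tess.star4, Tess.ofReal,
      Tess.one_re, Tess.one_imI, Tess.one_imJ, Tess.one_imK,
      Tess.mul_re, Tess.mul_imI, Tess.mul_imJ, Tess.mul_imK, Tess.add_re, Tess.add_imI,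
      Tess.add_imJ, Tess.add_imK, Tess.neg_re, Tess.neg_imI, Tess.neg_imJ, Tess.neg_imK] <;>
    ring

/-- For tessarine vectors `x, y ∈ 𝕋ⁿ`, the augmented vector of the
componentwise product `x ⋆ y` satisfies `\overline{x ⋆ y} = 𝒟^x ȳ`, where
`𝒟^x = 𝒥ₙ diag(xʳ) 𝒥ₙᴴ`. -/
theorem augmented_star_product {n : ℕ} (x y : Fin n → Tess) :
    augv (vstar x y) =
      (Jn n * Matrix.diagonal (fun q => Tess.ofReal (realv x q)) * (Jn n).hT).mulVec
        (augv y) := by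
  funext ⟨μ, a⟩
  simp only [augv, vstar, Matrix.mulVec, dotProduct, Matrix.mul_apply,
    Fintype.sum_prod_type, Jn, Matrix.hT, Matrix.smul_apply, Matrix.kroneckerMap_apply,
    Matrix.of_apply, Matrix.diagonal_apply, Matrix.one_apply, smul_eq_mul,
    Prod.mk.injEq, ite_and, mul_ite, ite_mul, mul_zero, zero_mul, mul_one,
    apply_ite Tess.conj, Tess.conj_zero, ite_self,
    Finset.sum_ite_eq, Finset.sum_ite_eq', Finset.mem_univ, if_true]
  simp only [Finset.sum_ite_irrel, Finset.sum_const_zero, ite_mul, zero_mul,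
    Finset.sum_ite_eq, Finset.mem_univ, if_true]
  have h : ∀ ν : Fin 4, realv x (ν, a) = Tess.comp ν (x a) := fun _ => rfl
  simp only [h, entry_eq]
  exact key μ (x a) (y a)
end
end

section
/- If x(t) ∈ 𝕋ⁿ is 𝕋₁-proper and widely factorizable with factors Ā(t), B̄(t) ∈ 𝕋^{4n×p}, then its augmented pseudo-autocorrelation is block diagonal: Γ_{x̄}(t,s) = diag(Γ_x(t,s), Γ_x(t,s)*, Γ_x(t,s)^ı, Γ_x(t,s)^κ) (the superscripts denoting entrywise application of the corresponding conjugation), and Γ_x(t,s) = A₁(t)B₁ᴴ(s) for t ≥ s and Γ_x(t,s) = B₁(t)A₁ᴴ(s) for t < s, where A₁(t) = [Iₙ, 0_{n×3n}]Ā(t) and B₁(t) = [Iₙ, 0_{n×3n}]B̄(t). -/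
open MeasureTheory Matrix
open scoped Kronecker

noncomputable section

@[simp] lemma cnu_zero' : cnu 0 = id := rfl
@[simp] lemma cnu_one' : cnu 1 = Tess.conj := rfl
@[simp] lemma cnu_two' : cnu 2 = Tess.conjI := rfl
@[simp] lemma cnu_three' : cnu 3 = Tess.conjK := rfl

def mulFin4 : Fin 4 → Fin 4 → Fin 4 :=
  ![![0,1,2,3], ![1,0,3,2], ![2,3,0,1], ![3,2,1,0]]

lemma cnu_mul_conj (a b : Fin 4) (z w : Tess) :
    cnu a z * Tess.conj (cnu b w) = cnu a (z * Tess.conj (cnu (mulFin4 a b) w)) := by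
  fin_cases a <;> fin_cases b <;>
    refine Tess.ext ?_ ?_ ?_ ?_ <;>
      simp [mulFin4, Tess.conj, Tess.conjI, Tess.conjK] <;> ring

lemma texp_cnu {Ω : Type*} [MeasurableSpace Ω] (μ : Measure Ω) (a : Fin 4) (f : Ω → Tess) :
    texp μ (fun ω => cnu a (f ω)) = cnu a (texp μ f) := by
  fin_cases a <;> refine Tess.ext ?_ ?_ ?_ ?_ <;>
    simp [texp, Tess.conj, Tess.conjI, Tess.conjK, integral_neg]

lemma cnu_zero0 (a : Fin 4) : cnu a 0 = 0 := by
  fin_cases a <;> refine Tess.ext ?_ ?_ ?_ ?_ <;>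
    simp [Tess.conj, Tess.conjI, Tess.conjK]

/-- If `x(t) ∈ 𝕋ⁿ` is `𝕋₁`-proper and widely factorizable with factors
`Ā(t), B̄(t) ∈ 𝕋^{4n×p}`, then `Γ_{x̄}(t,s) = diag(Γ_x(t,s), Γ_x(t,s)*, Γ_x(t,s)^ı,
Γ_x(t,s)^κ)` and `Γ_x(t,s) = A₁(t)B₁ᴴ(s)` for `t ≥ s`, `Γ_x(t,s) = B₁(t)A₁ᴴ(s)` for
`t < s`, where `A₁(t) = [Iₙ, 0]Ā(t)` and `B₁(t) = [Iₙ, 0]B̄(t)`. -/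
theorem T1proper_widely_factorizable {Ω : Type} [MeasurableSpace Ω]
    (μ : MeasureTheory.Measure Ω) [MeasureTheory.IsProbabilityMeasure μ] {n p : ℕ}
    (x : ℤ → Ω → Fin n → Tess)
    (hzero : ∀ t, ZeroMean μ (x t)) (hL2 : ∀ t, SecondOrder μ (x t))
    (Abar Bbar : ℤ → Matrix (Fin 4 × Fin n) (Fin p) Tess)
    (hfac : ∀ t s : ℤ,
      (s ≤ t → Gamma μ (fun ω => augv (x t ω)) (fun ω => augv (x s ω)) =
        Abar t * (Bbar s).hT) ∧
      (t < s → Gamma μ (fun ω => augv (x t ω)) (fun ω => augv (x s ω)) =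
        Bbar t * (Abar s).hT))
    (hproper : T1proper μ x) :
    (∀ t s : ℤ, Gamma μ (fun ω => augv (x t ω)) (fun ω => augv (x s ω)) =
      Matrix.of fun q q' : Fin 4 × Fin n =>
        if q.1 = q'.1 then cnu q.1 (Gamma μ (x t) (x s) q.2 q'.2) else 0) ∧
    (∀ t s : ℤ,
      (s ≤ t → Gamma μ (x t) (x s) =
        (Abar t).submatrix (fun i : Fin n => ((0 : Fin 4), i)) id *
          ((Bbar s).submatrix (fun i : Fin n => ((0 : Fin 4), i)) id).hT) ∧
      (t < s → Gamma μ (x t) (x s) =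
        (Bbar t).submatrix (fun i : Fin n => ((0 : Fin 4), i)) id *
          ((Abar s).submatrix (fun i : Fin n => ((0 : Fin 4), i)) id).hT)) := by
  constructor
  · intro t s
    refine Matrix.ext fun ⟨a, i⟩ ⟨b, j⟩ => ?_
    have key : Gamma μ (fun ω => augv (x t ω)) (fun ω => augv (x s ω)) (a, i) (b, j)
        = cnu a (Gamma μ (x t) (fun ω => cnu (mulFin4 a b) ∘ x s ω) i j) := by
      show texp μ (fun ω => cnu a (x t ω i) * Tess.conj (cnu b (x s ω j))) = _
      simp only [cnu_mul_conj]
      rw [texp_cnu]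
      rfl
    rw [key]
    rcases eq_or_ne a b with rfl | hab
    · have h0 : mulFin4 a a = 0 := by fin_cases a <;> rfl
      rw [h0]
      simp only [Matrix.of_apply, if_pos rfl, cnu_zero']
      rfl
    · have h0 : Gamma μ (x t) (fun ω => cnu (mulFin4 a b) ∘ x s ω) = 0 := by
        fin_cases a <;> fin_cases b <;> simp_all [mulFin4] <;>
          first
            | exact (hproper t s).1
            | exact (hproper t s).2.1
            | exact (hproper t s).2.2
      rw [h0]
      simp [cnu_zero0, hab]
  · intro t s
    have h00 : ∀ t s : ℤ, Gamma μ (x t) (x s) =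
        (Gamma μ (fun ω => augv (x t ω)) (fun ω => augv (x s ω))).submatrix
          (fun i : Fin n => ((0 : Fin 4), i)) (fun j : Fin n => ((0 : Fin 4), j)) := by
      intro t s
      refine Matrix.ext fun i j => rfl
    constructor
    · intro hts
      rw [h00, (hfac t s).1 hts]
      refine Matrix.ext fun i j => ?_
      simp [Matrix.mul_apply, Matrix.submatrix_apply, Matrix.hT]
    · intro hts
      rw [h00, (hfac t s).2 hts]
      refine Matrix.ext fun i j => ?_
      simp [Matrix.mul_apply, Matrix.submatrix_apply, Matrix.hT]
end
end

section
/- Let x(t) ∈ 𝕋ⁿ be a zero-mean second-order signal whose augmented vector satisfies the linear state model x̄(t+1) = F̄(t)x̄(t) + w̄(t), t ≥ 0, where F̄(t) ∈ 𝕋^{4n×4n} are known deterministic matrices and w̄(t) is the augmented vector of a zero-mean tessarine white noise with E[w̄(t) x̄ᴴ(s)] = 0 for all s ≤ t. Assume the transition matrices Φ(t,0) = F̄(t−1)⋯F̄(0) (with Φ(0,0) = I₄ₙ) are invertible. Then for all t ≥ s ≥ 0, Γ_{x̄}(t,s) = Φ(t,0)Φ(s,0)⁻¹Γ_{x̄}(s,s);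 consequently, x(t) is widely factorizable with factors Ā(t) = Φ(t,0) and B̄(t) = Γ_{x̄}(t,t)Φ(t,0)^{−ᴴ}. -/
open MeasureTheory Matrix
open scoped Kronecker

noncomputable section

/- ========== auxiliary lemmas ========== -/
section AuxLemmas
open MeasureTheory

namespace Tess

lemma conj_add' (a b : Tess) : conj (a + b) = conj a + conj b := by
  ext <;> simp [conj] <;> ring
lemma conj_mul' (a b : Tess) : conj (a * b) = conj a * conj b := by
  ext <;> simp [conj] <;> ring
lemma conj_conj' (a : Tess) : conj (conj a) = a := by ext <;> simp [conj]

/-- Conjugation as a ring homomorphism. -/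
def conjHom : Tess →+* Tess where
  toFun := conj
  map_one' := by ext <;> simp [conj]
  map_mul' := conj_mul'
  map_zero' := by ext <;> simp [conj]
  map_add' := conj_add'

lemma comp_zero' (z : Tess) : comp 0 z = z.re := rfl
lemma comp_one' (z : Tess) : comp 1 z = z.imI := rfl
lemma comp_two' (z : Tess) : comp 2 z = z.imJ := rfl
lemma comp_three' (z : Tess) : comp 3 z = z.imK := rfl

end Tess

variable {Ω : Type*} [MeasurableSpace Ω] {μ : Measure Ω}

/-- All four real components are integrable. -/
def TInt (μ : Measure Ω) (f : Ω → Tess) : Prop :=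
  Integrable (fun ω => (f ω).re) μ ∧ Integrable (fun ω => (f ω).imI) μ ∧
  Integrable (fun ω => (f ω).imJ) μ ∧ Integrable (fun ω => (f ω).imK) μ

lemma integrable_comb {f1 f2 f3 f4 : Ω → ℝ} (a b c d : ℝ)
    (h1 : Integrable f1 μ) (h2 : Integrable f2 μ)
    (h3 : Integrable f3 μ) (h4 : Integrable f4 μ) :
    Integrable (fun ω => a * f1 ω + b * f2 ω + c * f3 ω + d * f4 ω) μ :=
  (((h1.const_mul a).add (h2.const_mul b)).add (h3.const_mul c)).add (h4.const_mul d)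

lemma integral_comb {f1 f2 f3 f4 : Ω → ℝ} (a b c d : ℝ)
    (h1 : Integrable f1 μ) (h2 : Integrable f2 μ)
    (h3 : Integrable f3 μ) (h4 : Integrable f4 μ) :
    ∫ ω, (a * f1 ω + b * f2 ω + c * f3 ω + d * f4 ω) ∂μ =
      a * ∫ ω, f1 ω ∂μ + b * ∫ ω, f2 ω ∂μ + c * ∫ ω, f3 ω ∂μ + d * ∫ ω, f4 ω ∂μ := by
  have A2 : Integrable (fun ω => a * f1 ω + b * f2 ω) μ :=
    (h1.const_mul a).add (h2.const_mul b)
  have A3 : Integrable (fun ω => a * f1 ω + b * f2 ω + c * f3 ω) μ :=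
    A2.add (h3.const_mul c)
  rw [integral_add A3 (h4.const_mul d), integral_add A2 (h3.const_mul c),
      integral_add (h1.const_mul a) (h2.const_mul b),
      integral_const_mul, integral_const_mul, integral_const_mul, integral_const_mul]

lemma texp_zero : texp μ (fun _ => (0 : Tess)) = 0 := by
  ext <;> simp [texp]

lemma texp_add {f g : Ω → Tess} (hf : TInt μ f) (hg : TInt μ g) :
    texp μ (fun ω => f ω + g ω) = texp μ f + texp μ g := by
  obtain ⟨hf1, hf2, hf3, hf4⟩ := hf
  obtain ⟨hg1, hg2, hg3, hg4⟩ := hg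
  ext
  · exact integral_add hf1 hg1
  · exact integral_add hf2 hg2
  · exact integral_add hf3 hg3
  · exact integral_add hf4 hg4

lemma TInt.add' {f g : Ω → Tess} (hf : TInt μ f) (hg : TInt μ g) :
    TInt μ (fun ω => f ω + g ω) :=
  ⟨hf.1.add hg.1, hf.2.1.add hg.2.1, hf.2.2.1.add hg.2.2.1, hf.2.2.2.add hg.2.2.2⟩

lemma TInt.zero' : TInt μ (fun _ => (0 : Tess)) := by
  refine ⟨?_, ?_, ?_, ?_⟩ <;> simpa using (integrable_const (0:ℝ) (μ := μ))

lemma TInt.const_mul' {f : Ω → Tess} (c : Tess) (hf : TInt μ f) :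
    TInt μ (fun ω => c * f ω) := by
  obtain ⟨h1, h2, h3, h4⟩ := hf
  refine ⟨?_, ?_, ?_, ?_⟩
  · have h : (fun ω => (c * f ω).re) = fun ω =>
        c.re * (f ω).re + (-c.imI) * (f ω).imI + c.imJ * (f ω).imJ + (-c.imK) * (f ω).imK := by
      funext ω; simp; ring
    rw [h]; exact integrable_comb _ _ _ _ h1 h2 h3 h4
  · have h : (fun ω => (c * f ω).imI) = fun ω =>
        c.imI * (f ω).re + c.re * (f ω).imI + c.imK * (f ω).imJ + c.imJ * (f ω).imK := by
      funext ω; simp; ring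
    rw [h]; exact integrable_comb _ _ _ _ h1 h2 h3 h4
  · have h : (fun ω => (c * f ω).imJ) = fun ω =>
        c.imJ * (f ω).re + (-c.imK) * (f ω).imI + c.re * (f ω).imJ + (-c.imI) * (f ω).imK := by
      funext ω; simp; ring
    rw [h]; exact integrable_comb _ _ _ _ h1 h2 h3 h4
  · have h : (fun ω => (c * f ω).imK) = fun ω =>
        c.imK * (f ω).re + c.imJ * (f ω).imI + c.imI * (f ω).imJ + c.re * (f ω).imK := by
      funext ω; simp; ring
    rw [h]; exact integrable_comb _ _ _ _ h1 h2 h3 h4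

lemma texp_const_mul {f : Ω → Tess} (c : Tess) (hf : TInt μ f) :
    texp μ (fun ω => c * f ω) = c * texp μ f := by
  obtain ⟨h1, h2, h3, h4⟩ := hf
  ext
  · have h : (fun ω => (c * f ω).re) = fun ω =>
        c.re * (f ω).re + (-c.imI) * (f ω).imI + c.imJ * (f ω).imJ + (-c.imK) * (f ω).imK := by
      funext ω; simp; ring
    show ∫ ω, (c * f ω).re ∂μ = _
    rw [h, integral_comb _ _ _ _ h1 h2 h3 h4]; simp [texp]; ring
  · have h : (fun ω => (c * f ω).imI) = fun ω =>
        c.imI * (f ω).re + c.re * (f ω).imI + c.imK * (f ω).imJ + c.imJ * (f ω).imK := by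
      funext ω; simp; ring
    show ∫ ω, (c * f ω).imI ∂μ = _
    rw [h, integral_comb _ _ _ _ h1 h2 h3 h4]; simp [texp]; ring
  · have h : (fun ω => (c * f ω).imJ) = fun ω =>
        c.imJ * (f ω).re + (-c.imK) * (f ω).imI + c.re * (f ω).imJ + (-c.imI) * (f ω).imK := by
      funext ω; simp; ring
    show ∫ ω, (c * f ω).imJ ∂μ = _
    rw [h, integral_comb _ _ _ _ h1 h2 h3 h4]; simp [texp]; ring
  · have h : (fun ω => (c * f ω).imK) = fun ω =>
        c.imK * (f ω).re + c.imJ * (f ω).imI + c.imI * (f ω).imJ + c.re * (f ω).imK := by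
      funext ω; simp; ring
    show ∫ ω, (c * f ω).imK ∂μ = _
    rw [h, integral_comb _ _ _ _ h1 h2 h3 h4]; simp [texp]; ring

lemma texp_conj {f : Ω → Tess} :
    texp μ (fun ω => Tess.conj (f ω)) = Tess.conj (texp μ f) := by
  ext <;> simp [texp, Tess.conj, integral_neg]

lemma tint_sum {ι : Type*} (s : Finset ι) (f : ι → Ω → Tess)
    (h : ∀ j ∈ s, TInt μ (f j)) : TInt μ (fun ω => ∑ j ∈ s, f j ω) := by
  classical
  induction s using Finset.induction_on with
  | empty => simpa using TInt.zero' (μ := μ)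
  | insert a s' hj ih =>
    simp only [Finset.sum_insert hj]
    exact TInt.add' (h a (Finset.mem_insert_self a s'))
      (ih fun j hjs => h j (Finset.mem_insert_of_mem hjs))

lemma texp_sum {ι : Type*} (s : Finset ι) (f : ι → Ω → Tess)
    (h : ∀ j ∈ s, TInt μ (f j)) :
    texp μ (fun ω => ∑ j ∈ s, f j ω) = ∑ j ∈ s, texp μ (f j) := by
  classical
  induction s using Finset.induction_on with
  | empty => simpa using texp_zero (μ := μ)
  | insert a s' hj ih =>
    simp only [Finset.sum_insert hj]
    rw [texp_add (h a (Finset.mem_insert_self a s'))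
        (tint_sum s' f fun j hjs => h j (Finset.mem_insert_of_mem hjs)),
      ih fun j hjs => h j (Finset.mem_insert_of_mem hjs)]

end AuxLemmas
section GammaLemmas
open MeasureTheory

variable {Ω : Type*} [MeasurableSpace Ω] {μ : Measure Ω}

lemma integrable_mul_L2 {f g : Ω → ℝ} (hf : MemLp f 2 μ) (hg : MemLp g 2 μ) :
    Integrable (fun ω => f ω * g ω) μ := by
  have h : MemLp (f • g) 1 μ := hg.smul hf
  exact memLp_one_iff_integrable.mp h

lemma memLp_comps {m : Type*} {u : Ω → m → Tess} (h : SecondOrder μ u) (a : m) :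
    MemLp (fun ω => (u ω a).re) 2 μ ∧ MemLp (fun ω => (u ω a).imI) 2 μ ∧
    MemLp (fun ω => (u ω a).imJ) 2 μ ∧ MemLp (fun ω => (u ω a).imK) 2 μ :=
  ⟨h a 0, h a 1, h a 2, h a 3⟩

lemma tint_gamma_entry {m m' : Type*} {u : Ω → m → Tess} {v : Ω → m' → Tess}
    (hu : SecondOrder μ u) (hv : SecondOrder μ v) (a : m) (b : m') :
    TInt μ (fun ω => u ω a * Tess.conj (v ω b)) := by
  obtain ⟨u1, u2, u3, u4⟩ := memLp_comps hu a
  obtain ⟨v1, v2, v3, v4⟩ := memLp_comps hv b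
  refine ⟨?_, ?_, ?_, ?_⟩
  · have h : (fun ω => (u ω a * Tess.conj (v ω b)).re) = fun ω =>
        (1:ℝ) * ((u ω a).re * (v ω b).re) + (1:ℝ) * ((u ω a).imI * (v ω b).imI)
        + (1:ℝ) * ((u ω a).imJ * (v ω b).imJ) + (1:ℝ) * ((u ω a).imK * (v ω b).imK) := by
      funext ω; simp [Tess.conj]; try ring
    rw [h]
    exact integrable_comb _ _ _ _ (integrable_mul_L2 u1 v1) (integrable_mul_L2 u2 v2)
      (integrable_mul_L2 u3 v3) (integrable_mul_L2 u4 v4)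
  · have h : (fun ω => (u ω a * Tess.conj (v ω b)).imI) = fun ω =>
        (-1:ℝ) * ((u ω a).re * (v ω b).imI) + (1:ℝ) * ((u ω a).imI * (v ω b).re)
        + (-1:ℝ) * ((u ω a).imJ * (v ω b).imK) + (1:ℝ) * ((u ω a).imK * (v ω b).imJ) := by
      funext ω; simp [Tess.conj]; try ring
    rw [h]
    exact integrable_comb _ _ _ _ (integrable_mul_L2 u1 v2) (integrable_mul_L2 u2 v1)
      (integrable_mul_L2 u3 v4) (integrable_mul_L2 u4 v3)
  · have h : (fun ω => (u ω a * Tess.conj (v ω b)).imJ) = fun ω =>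
        (1:ℝ) * ((u ω a).re * (v ω b).imJ) + (1:ℝ) * ((u ω a).imJ * (v ω b).re)
        + (1:ℝ) * ((u ω a).imI * (v ω b).imK) + (1:ℝ) * ((u ω a).imK * (v ω b).imI) := by
      funext ω; simp [Tess.conj]; try ring
    rw [h]
    exact integrable_comb _ _ _ _ (integrable_mul_L2 u1 v3) (integrable_mul_L2 u3 v1)
      (integrable_mul_L2 u2 v4) (integrable_mul_L2 u4 v2)
  · have h : (fun ω => (u ω a * Tess.conj (v ω b)).imK) = fun ω =>
        (-1:ℝ) * ((u ω a).re * (v ω b).imK) + (1:ℝ) * ((u ω a).imK * (v ω b).re)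
        + (1:ℝ) * ((u ω a).imI * (v ω b).imJ) + (-1:ℝ) * ((u ω a).imJ * (v ω b).imI) := by
      funext ω; simp [Tess.conj]; try ring
    rw [h]
    exact integrable_comb _ _ _ _ (integrable_mul_L2 u1 v4) (integrable_mul_L2 u4 v1)
      (integrable_mul_L2 u2 v3) (integrable_mul_L2 u3 v2)

lemma so_augv {n : ℕ} {x : Ω → Fin n → Tess} (h : SecondOrder μ x) :
    SecondOrder μ (fun ω => augv (x ω)) := by
  rintro ⟨k, j⟩ ν
  obtain ⟨h1, h2, h3, h4⟩ := memLp_comps h j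
  fin_cases k <;> fin_cases ν <;>
    simp only [augv, cnu, Tess.comp, Tess.conj, Tess.conjI, Tess.conjK,
      Matrix.cons_val_zero, Matrix.cons_val_one, Matrix.head_cons, Matrix.cons_val_two,
      Matrix.cons_val_three, Matrix.tail_cons, id_eq, Fin.isValue] <;>
    first
      | exact h1 | exact h2 | exact h3 | exact h4
      | exact h2.neg | exact h3.neg | exact h4.neg

end GammaLemmas
section GammaStructure
open MeasureTheory

variable {Ω : Type*} [MeasurableSpace Ω] {μ : Measure Ω}

lemma Gamma_apply {m m' : Type*} (x : Ω → m → Tess) (y : Ω → m' → Tess) (a : m) (b : m') :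
    Gamma μ x y a b = texp μ (fun ω => x ω a * Tess.conj (y ω b)) := rfl

lemma Gamma_state {m m' : Type*} [Fintype m] {u v : Ω → m → Tess} {y : Ω → m' → Tess}
    (M : Matrix m m Tess) (hu : SecondOrder μ u) (hv : SecondOrder μ v)
    (hy : SecondOrder μ y) :
    Gamma μ (fun ω => M.mulVec (u ω) + v ω) y = M * Gamma μ u y + Gamma μ v y := by
  refine Matrix.ext fun a b => ?_
  have hrw : (fun ω => ((fun ω => M.mulVec (u ω) + v ω) ω a * Tess.conj (y ω b)))
      = fun ω => (∑ j, M a j * (u ω j * Tess.conj (y ω b))) + v ω a * Tess.conj (y ω b) := by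
    funext ω
    simp only [Pi.add_apply, Matrix.mulVec, dotProduct, add_mul, Finset.sum_mul, mul_assoc]
  rw [Gamma_apply, hrw,
    texp_add (tint_sum _ _ fun j _ => TInt.const_mul' _ (tint_gamma_entry hu hy j b))
      (tint_gamma_entry hv hy a b),
    texp_sum _ _ fun j _ => TInt.const_mul' _ (tint_gamma_entry hu hy j b)]
  rw [Finset.sum_congr rfl fun j _ => texp_const_mul (M a j) (tint_gamma_entry hu hy j b)]
  simp [Matrix.mul_apply, Gamma_apply]

lemma hT_hT {m m' : Type*} (A : Matrix m m' Tess) : A.hT.hT = A := by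
  refine Matrix.ext fun a b => ?_; simp [Matrix.hT, Tess.conj_conj']

lemma hT_mul {m m' m'' : Type*} [Fintype m'] (A : Matrix m m' Tess)
    (B : Matrix m' m'' Tess) : (A * B).hT = B.hT * A.hT := by
  refine Matrix.ext fun a b => ?_
  show Tess.conjHom (∑ j, A b j * B j a) = ∑ j, Tess.conj (B j a) * Tess.conj (A b j)
  rw [map_sum]
  exact Finset.sum_congr rfl fun j _ => by
    rw [_root_.map_mul]; exact mul_comm _ _

lemma Gamma_hT {m m' : Type*} (x : Ω → m → Tess) (y : Ω → m' → Tess) :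
    (Gamma μ x y).hT = Gamma μ y x := by
  refine Matrix.ext fun a b => ?_
  show Tess.conj (texp μ fun ω => x ω b * Tess.conj (y ω a)) = _
  rw [← texp_conj]
  show texp μ _ = texp μ _
  congr 1
  funext ω
  rw [Tess.conj_mul', Tess.conj_conj', mul_comm]

end GammaStructure
/-- A signal whose augmented vector follows the linear state model
`x̄(t+1) = F̄(t)x̄(t) + w̄(t)` with invertible transition matrices `Φ(t,0)` satisfies
`Γ_{x̄}(t,s) = Φ(t,0)Φ(s,0)⁻¹Γ_{x̄}(s,s)` for `t ≥ s`, and hence is widely factorizable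
with `Ā(t) = Φ(t,0)` and `B̄(t) = Γ_{x̄}(t,t)Φ(t,0)^{−ᴴ}`. -/
theorem stateModel_widely_factorizable {Ω : Type} [MeasurableSpace Ω]
    (μ : MeasureTheory.Measure Ω) [MeasureTheory.IsProbabilityMeasure μ] {n : ℕ}
    (x : ℕ → Ω → Fin n → Tess) (w : ℕ → Ω → Fin n → Tess)
    (hzero : ∀ t, ZeroMean μ (x t)) (hL2 : ∀ t, SecondOrder μ (x t))
    (hw_zero : ∀ t, ZeroMean μ (w t)) (hw_L2 : ∀ t, SecondOrder μ (w t))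
    (F : ℕ → Matrix (Fin 4 × Fin n) (Fin 4 × Fin n) Tess)
    (hstate : ∀ t ω, augv (x (t+1) ω) = (F t).mulVec (augv (x t ω)) + augv (w t ω))
    (hwhite : ∀ t s : ℕ, t ≠ s →
      Gamma μ (fun ω => augv (w t ω)) (fun ω => augv (w s ω)) = 0)
    (horth : ∀ t s : ℕ, s ≤ t →
      Gamma μ (fun ω => augv (w t ω)) (fun ω => augv (x s ω)) = 0)
    (Phi : ℕ → Matrix (Fin 4 × Fin n) (Fin 4 × Fin n) Tess)
    (hPhi0 : Phi 0 = 1) (hPhiS : ∀ t, Phi (t+1) = F t * Phi t)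
    (hinv : ∀ t, IsUnit (Phi t)) :
    (∀ t s : ℕ, s ≤ t →
      Gamma μ (fun ω => augv (x t ω)) (fun ω => augv (x s ω)) =
        Phi t * (Phi s)⁻¹ * Gamma μ (fun ω => augv (x s ω)) (fun ω => augv (x s ω))) ∧
    (∀ t s : ℕ,
      (s ≤ t → Gamma μ (fun ω => augv (x t ω)) (fun ω => augv (x s ω)) =
        Phi t * (Gamma μ (fun ω => augv (x s ω)) (fun ω => augv (x s ω)) *
          ((Phi s)⁻¹).hT).hT) ∧
      (t < s → Gamma μ (fun ω => augv (x t ω)) (fun ω => augv (x s ω)) =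
        (Gamma μ (fun ω => augv (x t ω)) (fun ω => augv (x t ω)) * ((Phi t)⁻¹).hT) *
          (Phi s).hT)) := by
  classical
  have hdet : ∀ t, IsUnit (Phi t).det := fun t => (Matrix.isUnit_iff_isUnit_det _).1 (hinv t)
  have step : ∀ t s : ℕ, s ≤ t →
      Gamma μ (fun ω => augv (x (t+1) ω)) (fun ω => augv (x s ω)) =
        F t * Gamma μ (fun ω => augv (x t ω)) (fun ω => augv (x s ω)) := by
    intro t s hst
    have hfun : (fun ω => augv (x (t+1) ω))
        = fun ω => (F t).mulVec (augv (x t ω)) + augv (w t ω) :=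
      funext fun ω => hstate t ω
    rw [hfun, Gamma_state (F t) (so_augv (hL2 t)) (so_augv (hw_L2 t)) (so_augv (hL2 s)),
      horth t s hst, add_zero]
  have key : ∀ t s : ℕ, s ≤ t →
      Gamma μ (fun ω => augv (x t ω)) (fun ω => augv (x s ω)) =
        Phi t * (Phi s)⁻¹ * Gamma μ (fun ω => augv (x s ω)) (fun ω => augv (x s ω)) := by
    intro t s hst
    obtain ⟨d, rfl⟩ := Nat.exists_eq_add_of_le hst
    clear hst
    induction d with
    | zero =>
      simp only [Nat.add_zero]
      rw [Matrix.mul_nonsing_inv _ (hdet s), one_mul]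
    | succ d ih =>
      have he : s + (d + 1) = (s + d) + 1 := rfl
      rw [he, step (s + d) s (Nat.le_add_right s d), ih, hPhiS,
        Matrix.mul_assoc, Matrix.mul_assoc, Matrix.mul_assoc]
  have hGsym : ∀ t : ℕ,
      (Gamma μ (fun ω => augv (x t ω)) (fun ω => augv (x t ω))).hT =
        Gamma μ (fun ω => augv (x t ω)) (fun ω => augv (x t ω)) := fun t => Gamma_hT _ _
  refine ⟨key, fun t s => ⟨?_, ?_⟩⟩
  · intro hst
    rw [key t s hst, hT_mul, hT_hT, hGsym, Matrix.mul_assoc]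
  · intro hts
    have h := congrArg Matrix.hT (key s t (le_of_lt hts))
    rw [Gamma_hT] at h
    rw [h, hT_mul, hT_mul, hGsym, Matrix.mul_assoc]
end
end
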